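/- Let k be a field, O = k[[t]], F = k((t)), and W a finite-dimensional F-vector space with a nondegenerate F-bilinear form B which is symmetric or alternating. Let Λ be a self-dual O-lattice in W (Λ^⊥ = Λ, where Λ^⊥ = {w ∈ W : B(w,x) ∈ O for all x ∈ Λ}), and let S ⊆ W be a finitely generated O-submodule with B(S,S) ⊆ O. Then M := S + (S+Λ)^⊥ is a self-dual O-lattice in W: M is a finitely generated O-submodule spanning W and M^⊥ = M. -/

import Mathlib

set_option maxHeartbeats 1000000 in
set_option synthInstance.maxHeartbeats 400000 in
open Submodule in
lemma lattice_exists_basis {k : Type*} [Field k] {W : Type*} [AddCommGroup W]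
    [Module (LaurentSeries k) W] [Module (PowerSeries k) W]
    [IsScalarTower (PowerSeries k) (LaurentSeries k) W]
    (L : Submodule (PowerSeries k) W) (hfg : L.FG)
    (hspan : Submodule.span (LaurentSeries k) (L : Set W) = ⊤) :
    ∃ (n : ℕ) (b : Module.Basis (Fin n) (LaurentSeries k) W),
      L = Submodule.span (PowerSeries k) (Set.range b) := by
  haveI : NoZeroSMulDivisors (PowerSeries k) W := by
    constructor
    intro a w h
    rcases eq_or_ne a 0 with rfl | ha
    · exact Or.inl rfl
    · refine Or.inr ?_
      have h2 : (algebraMap (PowerSeries k) (LaurentSeries k) a) • w = 0 := by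
        rwa [IsScalarTower.algebraMap_smul]
      have ha' : (algebraMap (PowerSeries k) (LaurentSeries k) a) ≠ 0 := by
        simpa using (map_ne_zero_iff _ (IsFractionRing.injective (PowerSeries k) (LaurentSeries k))).mpr ha
      have h3 := congrArg (fun v => (algebraMap (PowerSeries k) (LaurentSeries k) a)⁻¹ • v) h2
      simp only [smul_smul, inv_mul_cancel₀ ha', one_smul, smul_zero] at h3
      exact h3
  haveI : Module.Finite (PowerSeries k) L := Module.Finite.iff_fg.mpr hfg
  haveI : Module.Free (PowerSeries k) L := inferInstance
  let c := Module.Free.chooseBasis (PowerSeries k) L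
  let b0 : Module.Free.ChooseBasisIndex (PowerSeries k) L → W := fun i => (c i : W)
  have hli : LinearIndependent (PowerSeries k) b0 :=
    c.linearIndependent.map' L.subtype L.ker_subtype
  have hliF : LinearIndependent (LaurentSeries k) b0 :=
    (LinearIndependent.iff_fractionRing (PowerSeries k) (LaurentSeries k)).mp hli
  have hspanO : Submodule.span (PowerSeries k) (Set.range b0) = L := by
    have : Set.range b0 = L.subtype '' Set.range c := by
      ext w; simp [b0, Set.range_comp]
    rw [this, ← Submodule.map_span, c.span_eq, Submodule.map_top, Submodule.range_subtype]
  have hspanF : ⊤ ≤ Submodule.span (LaurentSeries k) (Set.range b0) := by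
    rw [← hspan, Submodule.span_le]
    intro w hw
    have : w ∈ Submodule.span (PowerSeries k) (Set.range b0) := by rw [hspanO]; exact hw
    exact Submodule.span_subset_span (PowerSeries k) (LaurentSeries k) _ this
  let bW := Module.Basis.mk hliF hspanF
  refine ⟨_, bW.reindex (Fintype.equivFin _), ?_⟩
  rw [Module.Basis.range_reindex]
  show L = Submodule.span (PowerSeries k) (Set.range ⇑bW)
  rw [show ⇑bW = b0 from Module.Basis.coe_mk hliF hspanF, hspanO]

set_option maxHeartbeats 1000000 in
set_option synthInstance.maxHeartbeats 400000 in
/-- Let `O = k[[t]]`, `F = k((t))`, and let `W` be a finite-dimensional `F`-vector space with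
a nondegenerate `F`-bilinear form `B`, symmetric or alternating.  Let `Λ` be a self-dual
`O`-lattice in `W` (`Λ^⊥ = Λ`, where `Λ^⊥ = {w : B(w,x) ∈ O for all x ∈ Λ}`), and let
`S ⊆ W` be a finitely generated `O`-submodule with `B(S,S) ⊆ O`.  Then
`M := S + (S+Λ)^⊥` is a self-dual `O`-lattice in `W`: `M` is a finitely generated
`O`-submodule spanning `W` over `F` with `M^⊥ = M`.  (Below `P` is the `O`-submodule
whose underlying set is `(S+Λ)^⊥`.) -/
theorem selfdual_lattice_from_integrable_submodule
    (k : Type*) [Field k] (W : Type*) [AddCommGroup W]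
    [Module (LaurentSeries k) W] [Module (PowerSeries k) W]
    [IsScalarTower (PowerSeries k) (LaurentSeries k) W]
    [FiniteDimensional (LaurentSeries k) W]
    (B : W →ₗ[LaurentSeries k] W →ₗ[LaurentSeries k] LaurentSeries k)
    (hndl : ∀ w, (∀ x, B w x = 0) → w = 0)
    (hndr : ∀ w, (∀ x, B x w = 0) → w = 0)
    (hsymOrAlt : (∀ x y, B x y = B y x) ∨ (∀ x, B x x = 0))
    (Λ : Submodule (PowerSeries k) W)
    (hΛfg : Λ.FG) (hΛspan : Submodule.span (LaurentSeries k) (Λ : Set W) = ⊤)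
    (hΛself : ∀ w : W,
      (∀ x ∈ Λ, B w x ∈ Set.range (algebraMap (PowerSeries k) (LaurentSeries k))) ↔ w ∈ Λ)
    (S : Submodule (PowerSeries k) W) (hSfg : S.FG)
    (hSint : ∀ x ∈ S, ∀ y ∈ S,
      B x y ∈ Set.range (algebraMap (PowerSeries k) (LaurentSeries k))) :
    ∃ P M : Submodule (PowerSeries k) W,
      (∀ w : W, w ∈ P ↔ ∀ x ∈ S ⊔ Λ,
        B w x ∈ Set.range (algebraMap (PowerSeries k) (LaurentSeries k)))
      ∧ M = S ⊔ P
      ∧ M.FG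
      ∧ Submodule.span (LaurentSeries k) (M : Set W) = ⊤
      ∧ (∀ w : W,
          (∀ x ∈ M, B w x ∈ Set.range (algebraMap (PowerSeries k) (LaurentSeries k)))
            ↔ w ∈ M) := by
  classical
  have hB : LinearMap.BilinForm.Nondegenerate B := ⟨fun w hw => hndl w hw, fun w hw => hndr w hw⟩
  -- membership in (1 : Submodule O F) is the same as the range condition
  have hone : ∀ z : LaurentSeries k,
      z ∈ (1 : Submodule (PowerSeries k) (LaurentSeries k)) ↔
        z ∈ Set.range (algebraMap (PowerSeries k) (LaurentSeries k)) := by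
    intro z
    rw [Submodule.mem_one]
    exact Iff.rfl
  -- integrality is symmetric in the two arguments
  have hsymO : ∀ x y : W,
      B x y ∈ (1 : Submodule (PowerSeries k) (LaurentSeries k)) →
        B y x ∈ (1 : Submodule (PowerSeries k) (LaurentSeries k)) := by
    intro x y h
    rcases hsymOrAlt with hsym | halt
    · rwa [hsym y x]
    · have : B y x = - B x y := by
        have h0 := halt (x + y)
        simp only [map_add, LinearMap.add_apply, halt x, halt y] at h0
        linear_combination h0
      rw [this]
      exact neg_mem h
  set L : Submodule (PowerSeries k) W := S ⊔ Λ with hLdef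
  have hLspan : Submodule.span (LaurentSeries k) (L : Set W) = ⊤ := by
    apply top_unique
    rw [← hΛspan]
    exact Submodule.span_mono (fun x hx => Submodule.mem_sup_right hx)
  obtain ⟨n, b, hb⟩ := lattice_exists_basis L (hSfg.sup hΛfg) hLspan
  set P : Submodule (PowerSeries k) W := LinearMap.BilinForm.dualSubmodule B L with hPdef
  have hPspan_eq : P = Submodule.span (PowerSeries k)
      (Set.range (LinearMap.BilinForm.dualBasis B hB b)) := by
    rw [hPdef, hb]
    exact LinearMap.BilinForm.dualSubmodule_span_of_basis B hB b
  have hPfg : P.FG := by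
    rw [hPspan_eq]
    exact Submodule.fg_span (Set.finite_range _)
  have hPspanF : Submodule.span (LaurentSeries k) (P : Set W) = ⊤ := by
    apply top_unique
    rw [← (LinearMap.BilinForm.dualBasis B hB b).span_eq]
    apply Submodule.span_mono
    rw [hPspan_eq]
    exact Submodule.subset_span
  -- double dual
  have hflipL : LinearMap.BilinForm.dualSubmodule B.flip L = P := by
    ext w
    simp only [LinearMap.BilinForm.mem_dualSubmodule, LinearMap.flip_apply, hPdef]
    exact ⟨fun h y hy => hsymO y w (h y hy), fun h y hy => hsymO w y (h y hy)⟩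
  have hPP : LinearMap.BilinForm.dualSubmodule B P = L := by
    rw [← hflipL, hb]
    exact LinearMap.BilinForm.dualSubmodule_dualSubmodule_flip_of_basis B hB b
  have anti : ∀ N₁ N₂ : Submodule (PowerSeries k) W, N₁ ≤ N₂ →
      LinearMap.BilinForm.dualSubmodule B N₂ ≤ LinearMap.BilinForm.dualSubmodule B N₁ :=
    fun N₁ N₂ h w hw y hy => hw y (h hy)
  have hΛdual : LinearMap.BilinForm.dualSubmodule B Λ = Λ := by
    ext w
    rw [LinearMap.BilinForm.mem_dualSubmodule, ← hΛself w]
    exact forall₂_congr fun x _ => hone _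
  have hSle : S ≤ LinearMap.BilinForm.dualSubmodule B S :=
    fun s hs y hy => (hone _).mpr (hSint s hs y hy)
  have hPleS : P ≤ LinearMap.BilinForm.dualSubmodule B S := anti _ _ le_sup_left
  have hPleΛ : P ≤ Λ := le_trans (anti _ _ le_sup_right) (le_of_eq hΛdual)
  have key : LinearMap.BilinForm.dualSubmodule B (S ⊔ P) = S ⊔ P := by
    apply le_antisymm
    · intro x hx
      have hxS : x ∈ LinearMap.BilinForm.dualSubmodule B S := fun y hy => hx y (le_sup_left (a := S) (b := P) hy)
      have hxP : x ∈ LinearMap.BilinForm.dualSubmodule B P := fun y hy => hx y (le_sup_right (a := S) (b := P) hy)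
      have hxL : x ∈ L := by rw [← hPP]; exact hxP
      obtain ⟨s, hs, l, hl, rfl⟩ := Submodule.mem_sup.mp hxL
      refine Submodule.mem_sup.mpr ⟨s, hs, l, ?_, rfl⟩
      intro y hy
      obtain ⟨s', hs', m, hm, rfl⟩ := Submodule.mem_sup.mp hy
      have h1 : B l s' ∈ (1 : Submodule (PowerSeries k) (LaurentSeries k)) := by
        have hx' : B (s + l) s' ∈ (1 : Submodule (PowerSeries k) (LaurentSeries k)) :=
          hxS s' hs'
        have hss : B s s' ∈ (1 : Submodule (PowerSeries k) (LaurentSeries k)) :=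
          (hone _).mpr (hSint s hs s' hs')
        have heq : B l s' = B (s + l) s' - B s s' := by
          simp only [map_add, LinearMap.add_apply]
          ring
        rw [heq]
        exact sub_mem hx' hss
      have h2 : B l m ∈ (1 : Submodule (PowerSeries k) (LaurentSeries k)) :=
        (hone _).mpr ((hΛself l).mpr hl m hm)
      have heq : B l (s' + m) = B l s' + B l m := map_add _ _ _
      rw [LinearMap.BilinForm.mem_dualSubmodule] at *
      exact heq ▸ add_mem h1 h2
    · rw [sup_le_iff]
      constructor
      · intro s hs y hy
        obtain ⟨s', hs', p, hp, rfl⟩ := Submodule.mem_sup.mp hy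
        have h1 : B s s' ∈ (1 : Submodule (PowerSeries k) (LaurentSeries k)) :=
          (hone _).mpr (hSint s hs s' hs')
        have h2 : B s p ∈ (1 : Submodule (PowerSeries k) (LaurentSeries k)) :=
          hsymO p s (hPleS hp s hs)
        have heq : B s (s' + p) = B s s' + B s p := map_add _ _ _
        exact heq ▸ add_mem h1 h2
      · intro p hp y hy
        obtain ⟨s', hs', p', hp', rfl⟩ := Submodule.mem_sup.mp hy
        have h1 : B p s' ∈ (1 : Submodule (PowerSeries k) (LaurentSeries k)) := hPleS hp s' hs'
        have h2 : B p p' ∈ (1 : Submodule (PowerSeries k) (LaurentSeries k)) := by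
          have : p ∈ L := le_sup_right (a := S) (b := Λ) (hPleΛ hp)
          exact hsymO p' p (hp' p this)
        have heq : B p (s' + p') = B p s' + B p p' := map_add _ _ _
        exact heq ▸ add_mem h1 h2
  refine ⟨P, S ⊔ P, ?_, rfl, hSfg.sup hPfg, ?_, ?_⟩
  · intro w
    rw [hPdef, LinearMap.BilinForm.mem_dualSubmodule]
    exact forall₂_congr fun x _ => hone _
  · apply top_unique
    rw [← hPspanF]
    exact Submodule.span_mono (fun x hx => Submodule.mem_sup_right hx)
  · intro w
    constructor
    · intro h
      rw [← key]
      exact fun y hy => (hone _).mpr (h y hy)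
    · intro h x hx
      have h' : w ∈ LinearMap.BilinForm.dualSubmodule B (S ⊔ P) := by rw [key]; exact h
      exact (hone _).mp (h' x hx)
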